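/- If λ = xφ₁ + yφ₂ + zφ₃ with x, y, z ∈ Z, where φ_m = ζ₇^m + ζ₇^{-m}, then N_{K/Q}(λ) = (x+y+z)³ - 7(x²z + y²x + z²y + xyz). -/

import Mathlib

open Real Polynomial

noncomputable def pcub : ℚ[X] := X^3 + X^2 - 2*X - 1

lemma pcub_natDegree : pcub.natDegree = 3 := by
  unfold pcub; compute_degree!

lemma pcub_monic : pcub.Monic := by
  unfold pcub; monicity!

lemma pcub_no_root (r : ℚ) : ¬ pcub.IsRoot r := by
  intro h
  have hr : r^3 + r^2 - 2*r - 1 = 0 := by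
    have := h; unfold pcub at this; simpa [IsRoot] using this
  have hint : IsIntegral ℤ r := by
    refine ⟨Polynomial.X^3 + (Polynomial.X^2 - 2*Polynomial.X - 1), ?_, ?_⟩
    · apply Polynomial.monic_X_pow_add
      have h1 : (Polynomial.X^2 - 2*Polynomial.X - 1 : ℤ[X]).natDegree ≤ 2 := by
        compute_degree
      calc (Polynomial.X^2 - 2*Polynomial.X - 1 : ℤ[X]).degree
          ≤ 2 := degree_le_natDegree.trans (by exact_mod_cast h1)
        _ < 3 := by norm_num
    · simp only [eval₂_sub, eval₂_add, eval₂_pow, eval₂_mul, eval₂_X, eval₂_one,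
        eval₂_ofNat]
      push_cast
      linarith [hr]
  obtain ⟨n, hn⟩ := IsIntegrallyClosed.isIntegral_iff.mp hint
  have hn' : (n:ℚ) = r := by exact_mod_cast hn
  rw [← hn'] at hr
  have hz : n^3 + n^2 - 2*n - 1 = 0 := by exact_mod_cast hr
  have hu : n * (n^2 + n - 2) = 1 := by ring_nf; linarith
  have := Int.isUnit_eq_one_or (IsUnit.of_mul_eq_one _ hu)
  rcases this with h1 | h1 <;> subst h1 <;> omega

lemma pcub_irred : Irreducible pcub := by
  rw [Polynomial.irreducible_iff_roots_eq_zero_of_degree_le_three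
    (by rw [pcub_natDegree]; norm_num) (by rw [pcub_natDegree])]
  rw [Multiset.eq_zero_iff_forall_notMem]
  intro r hr
  exact pcub_no_root r (isRoot_of_mem_roots hr)

lemma cos7_lt_one : Real.cos (2 * π / 7) < 1 := by
  have h := Real.cos_lt_cos_of_nonneg_of_le_pi (x := 0) (y := 2 * π / 7)
    le_rfl (by nlinarith [Real.pi_pos]) (by positivity)
  simpa using h

lemma cub_root : (2 * Real.cos (2 * π / 7))^3 + (2 * Real.cos (2 * π / 7))^2
    - 2 * (2 * Real.cos (2 * π / 7)) - 1 = 0 := by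
  set u := Real.cos (2 * π / 7) with hu
  have h43 : Real.cos (4 * (2 * π / 7)) = Real.cos (3 * (2 * π / 7)) := by
    have : (4 : ℝ) * (2 * π / 7) = 2 * π - 3 * (2 * π / 7) := by ring
    rw [this, Real.cos_two_pi_sub]
  have h4 : Real.cos (4 * (2 * π / 7)) = 2 * (2 * u^2 - 1)^2 - 1 := by
    have : (4 : ℝ) * (2 * π / 7) = 2 * (2 * (2 * π / 7)) := by ring
    rw [this, Real.cos_two_mul, Real.cos_two_mul, ← hu]
  have h3 : Real.cos (3 * (2 * π / 7)) = 4 * u^3 - 3 * u := by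
    rw [Real.cos_three_mul]
  have key : (u - 1) * (8 * u^3 + 4 * u^2 - 4 * u - 1) = 0 := by
    rw [h4, h3] at h43; nlinarith [h43]
  have hne : u - 1 ≠ 0 := by have := cos7_lt_one; intro h; nlinarith
  have h2 : 8 * u^3 + 4 * u^2 - 4 * u - 1 = 0 := by
    rcases mul_eq_zero.mp key with h | h
    · exact absurd h hne
    · exact h
  nlinarith [h2]

theorem norm_aux (c : ℝ) (hroot : c^3 + c^2 - 2*c - 1 = 0)
    (x y z : ℤ) (lam : IntermediateField.adjoin ℚ {c})
    (hlam : (lam : ℝ) = x * c + y * (c^2 - 2) + z * (c^3 - 3*c)) :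
    Algebra.norm ℚ lam =
      ((x + y + z : ℤ)^3 - 7 * (x^2 * z + y^2 * x + z^2 * y + x * y * z) : ℤ) := by
  have hic : IsIntegral ℚ c := by
    refine ⟨pcub, pcub_monic, ?_⟩
    unfold pcub
    simp only [eval₂_sub, eval₂_add, eval₂_pow, eval₂_mul, eval₂_X, eval₂_one, eval₂_ofNat]
    push_cast
    linarith [hroot]
  have hmin : minpoly ℚ c = pcub :=
    (minpoly.eq_of_irreducible_of_monic pcub_irred (by
      unfold pcub
      simp only [map_sub, map_add, map_pow, map_mul, aeval_X, map_ofNat, map_one]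
      linarith [hroot]) pcub_monic).symm
  set pb := IntermediateField.adjoin.powerBasis hic with hpb
  have hdim : pb.dim = 3 := by
    show (minpoly ℚ c).natDegree = 3
    rw [hmin, pcub_natDegree]
  set b := pb.basis.reindex (finCongr hdim) with hb
  have hgen : ((pb.gen : IntermediateField.adjoin ℚ {c}) : ℝ) = c := rfl
  set A : ℚ := (z : ℚ) - 2*y with hA
  set B : ℚ := (x : ℚ) - z with hB
  set Cc : ℚ := (y : ℚ) - z with hCc
  set M : Matrix (Fin 3) (Fin 3) ℚ :=
    !![A, Cc, B-Cc; B, A+2*Cc, 2*B-Cc; Cc, B-Cc, A-B+3*Cc] with hM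
  have hbj : ∀ j : Fin 3, (b j : ℝ) = c ^ (j : ℕ) := by
    intro j
    rw [hb, Module.Basis.reindex_apply, PowerBasis.coe_basis]
    push_cast [hgen]
    rfl
  have hsmul : ∀ (q : ℚ) (v : IntermediateField.adjoin ℚ {c}),
      ((q • v : IntermediateField.adjoin ℚ {c}) : ℝ) = q * v := by
    intro q v
    rw [Algebra.smul_def, MulMemClass.coe_mul]
    congr 1
  have key : ∀ j, lam * b j = ∑ i, M i j • b i := by
    intro j
    apply Subtype.ext
    push_cast [Fin.sum_univ_three, hsmul, hbj]
    rw [hlam]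
    fin_cases j <;> simp [hM, hA, hB, hCc] <;> push_cast
    · linear_combination (z : ℝ) * hroot
    · linear_combination ((z : ℝ) * c + (y - z)) * hroot
    · linear_combination ((z : ℝ) * c^2 + ((y:ℝ) - z) * c + ((x:ℝ) - y)) * hroot
  erw [Algebra.norm_eq_matrix_det b lam]
  have hMM : Algebra.leftMulMatrix b lam = M := by
    ext i j
    rw [Algebra.leftMulMatrix_eq_repr_mul, key j]
    exact congrFun (b.repr_sum_self fun i => M i j) i
  rw [hMM, hM, Matrix.det_fin_three]
  simp only [hA, hB, hCc]
  simp [Matrix.cons_val_zero, Matrix.cons_val_one, Matrix.head_cons]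
  push_cast
  ring

/-- If `λ = xφ₁ + yφ₂ + zφ₃` with `x, y, z ∈ ℤ`, where
`φ_m = ζ₇^m + ζ₇^{-m} = 2 cos (2πm/7)`, then
`N_{K/ℚ}(λ) = (x+y+z)³ - 7(x²z + y²x + z²y + xyz)`. -/
theorem norm_formula
    (K : IntermediateField ℚ ℝ)
    (hK : K = IntermediateField.adjoin ℚ {(2 * Real.cos (2 * π / 7) : ℝ)})
    (x y z : ℤ) (lam : K)
    (hlam : (lam : ℝ) = x * (2 * Real.cos (2 * π / 7)) +
      y * (2 * Real.cos (2 * 2 * π / 7)) + z * (2 * Real.cos (2 * 3 * π / 7))) :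
    Algebra.norm ℚ lam =
      ((x + y + z : ℤ)^3 - 7 * (x^2 * z + y^2 * x + z^2 * y + x * y * z) : ℤ) := by
  subst hK
  have h2 : (2 : ℝ) * Real.cos (2 * 2 * π / 7) = (2 * Real.cos (2 * π / 7))^2 - 2 := by
    have h : (2 : ℝ) * 2 * π / 7 = 2 * (2 * π / 7) := by ring
    rw [h, Real.cos_two_mul]; ring
  have h3 : (2 : ℝ) * Real.cos (2 * 3 * π / 7) =
      (2 * Real.cos (2 * π / 7))^3 - 3 * (2 * Real.cos (2 * π / 7)) := by
    have h : (2 : ℝ) * 3 * π / 7 = 3 * (2 * π / 7) := by ring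
    rw [h, Real.cos_three_mul]; ring
  rw [h2, h3] at hlam
  exact norm_aux _ cub_root x y z lam hlam
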